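/- Let Γ be a strongly regular graph with parameters (n, k, λ, μ) satisfying μ > 0 and k > μ, and let f be a proper endomorphism of Γ (a graph endomorphism that is not an automorphism) of rank r. Then n − r ≥ (k − μ + 4)/4. -/

import Mathlib

theorem stmt14 {V : Type*} [Fintype V] [DecidableEq V] (Γ : SimpleGraph V)
    [DecidableRel Γ.Adj] (n k ℓ μ : ℕ)
    (h : Γ.IsSRGWith n k ℓ μ) (hμ : 0 < μ) (hk : μ < k)
    (f : Γ →g Γ) (hf : ¬ Function.Bijective f) (r : ℕ)
    (hr : (Finset.univ.image (f : V → V)).card = r) :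
    ((k : ℝ) - μ + 4) / 4 ≤ (n : ℝ) - r := by
  classical
  -- f is not injective
  have hninj : ¬ Function.Injective (f : V → V) := fun hi =>
    hf (Finite.injective_iff_bijective.mp hi)
  rw [Function.not_injective_iff] at hninj
  obtain ⟨u, v, huv, hne⟩ := hninj
  -- u and v are not adjacent
  have hnadj : ¬ Γ.Adj u v := fun ha => (Γ.irrefl (huv ▸ f.map_adj ha))
  set w := f u with hw
  -- the big set T
  set S : Finset V := Γ.neighborFinset u ∪ Γ.neighborFinset v with hS
  set T : Finset V := insert u (insert v S) with hT
  have hSimg : ∀ x ∈ T, f x ∈ insert w (Γ.neighborFinset w) := by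
    intro x hx
    simp only [hT, Finset.mem_insert, hS, Finset.mem_union,
      SimpleGraph.mem_neighborFinset] at hx
    rcases hx with rfl | rfl | hx | hx
    · exact Finset.mem_insert_self _ _
    · rw [← huv]; exact Finset.mem_insert_self _ _
    · exact Finset.mem_insert_of_mem (by
        rw [SimpleGraph.mem_neighborFinset]
        exact (f.map_adj hx))
    · exact Finset.mem_insert_of_mem (by
        rw [SimpleGraph.mem_neighborFinset, huv]
        exact (f.map_adj hx))
  have himgT : (T.image (f : V → V)).card ≤ k + 1 := by
    calc (T.image (f : V → V)).card ≤ (insert w (Γ.neighborFinset w)).card :=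
          Finset.card_le_card (by
            intro y hy
            obtain ⟨x, hx, rfl⟩ := Finset.mem_image.mp hy
            exact hSimg x hx)
      _ ≤ (Γ.neighborFinset w).card + 1 := Finset.card_insert_le _ _
      _ = k + 1 := by rw [Γ.card_neighborFinset_eq_degree, h.regular w]
  -- card of S
  have hScard : S.card = 2 * k - μ := h.card_neighborFinset_union_of_not_adj hne hnadj
  have huS : u ∉ S := by
    simp only [hS, Finset.mem_union, SimpleGraph.mem_neighborFinset]
    push_neg
    exact ⟨Γ.irrefl, fun ha => hnadj ha.symm⟩
  have hvS : v ∉ S := by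
    simp only [hS, Finset.mem_union, SimpleGraph.mem_neighborFinset]
    push_neg
    exact ⟨fun ha => hnadj ha, Γ.irrefl⟩
  have hTcard : T.card = 2 * k - μ + 2 := by
    rw [hT, Finset.card_insert_of_notMem (by
        simp only [Finset.mem_insert]
        push_neg
        exact ⟨hne, huS⟩),
      Finset.card_insert_of_notMem hvS, hScard]
  -- key counting inequality : r + T.card ≤ (T.image f).card + n
  have hsplit : (Finset.univ.image (f : V → V)).card ≤
      (T.image (f : V → V)).card + ((Finset.univ \ T).image (f : V → V)).card := by
    refine le_trans (Finset.card_le_card ?_) (Finset.card_union_le _ _)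
    intro y hy
    obtain ⟨x, -, rfl⟩ := Finset.mem_image.mp hy
    by_cases hx : x ∈ T
    · exact Finset.mem_union_left _ (Finset.mem_image_of_mem _ hx)
    · exact Finset.mem_union_right _
        (Finset.mem_image_of_mem _ (Finset.mem_sdiff.mpr ⟨Finset.mem_univ _, hx⟩))
  have hpart : (Finset.univ \ T).card + T.card = n := by
    rw [Finset.card_sdiff_add_card_eq_card (Finset.subset_univ T), Finset.card_univ, h.card]
  have hkey : r + T.card ≤ (T.image (f : V → V)).card + n := by
    calc r + T.card = (Finset.univ.image (f : V → V)).card + T.card := by rw [hr]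
      _ ≤ ((T.image (f : V → V)).card + ((Finset.univ \ T).image (f : V → V)).card) + T.card :=
          add_le_add_left hsplit _
      _ ≤ ((T.image (f : V → V)).card + (Finset.univ \ T).card) + T.card :=
          add_le_add_left (add_le_add_right Finset.card_image_le _) _
      _ = (T.image (f : V → V)).card + n := by rw [add_assoc, hpart]
  rw [hTcard] at hkey
  have hμk : μ ≤ k := le_of_lt hk
  have hr' : r + 2 * k + 2 ≤ k + 1 + n + μ := by omega
  have hcast : (r : ℝ) + 2 * k + 2 ≤ k + 1 + n + μ := by exact_mod_cast hr'
  have hμkR : (μ : ℝ) ≤ k := by exact_mod_cast hμk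
  linarith
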